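/- Let g : ℝ³ × ℝ → ℝ be continuous and let θ > 1 be a real number (in the paper θ = qm/(q-1)). Suppose g(x,0) = 0 for all x, lim_{s→0} g(x,s)/(|s|^{θ-2} s) = 0 uniformly in x, and for each x the function s ↦ g(x,s)/|s|^{θ-1} is nondecreasing on ℝ \ {0}. Then for all (x,s) ∈ ℝ³ × ℝ, with G(x,s) = ∫₀ˢ g(x,t) dt, one has (1/θ) g(x,s) s ≥ G(x,s) ≥ 0. -/

import Mathlib

open MeasureTheory

theorem stmt3 (θ : ℝ) (hθ : 1 < θ)
    (g : EuclideanSpace ℝ (Fin 3) → ℝ → ℝ)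
    (hg_cont : Continuous fun z : EuclideanSpace ℝ (Fin 3) × ℝ => g z.1 z.2)
    (hg0 : ∀ x, g x 0 = 0)
    (hg_lim : ∀ ε > 0, ∃ δ > 0, ∀ x s, s ≠ 0 → |s| < δ →
      |g x s| ≤ ε * |s| ^ (θ - 1))
    (hg_mono : ∀ x, ∀ s t : ℝ, s ≠ 0 → t ≠ 0 → s ≤ t →
      g x s / |s| ^ (θ - 1) ≤ g x t / |t| ^ (θ - 1)) :
    ∀ x s, (∫ t in (0:ℝ)..s, g x t) ≤ (1 / θ) * (g x s * s) ∧
      0 ≤ ∫ t in (0:ℝ)..s, g x t := by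
  have hθ0 : (0:ℝ) < θ := lt_trans one_pos hθ
  have hθ1 : (0:ℝ) < θ - 1 := sub_pos.mpr hθ
  -- sign of g
  have hpos : ∀ x t, 0 < t → 0 ≤ g x t := by
    intro x t ht
    by_contra hlt
    push_neg at hlt
    have htpow : 0 < |t| ^ (θ - 1) := Real.rpow_pos_of_pos (abs_pos.mpr ht.ne') _
    have hc : g x t / |t| ^ (θ - 1) < 0 := div_neg_of_neg_of_pos hlt htpow
    set c := g x t / |t| ^ (θ - 1) with hcdef
    obtain ⟨δ, hδ, H⟩ := hg_lim (-c / 2) (by linarith)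
    set u := min (δ / 2) t with hudef
    have hu0 : 0 < u := lt_min (by linarith) ht
    have huδ : |u| < δ := by
      rw [abs_of_pos hu0]
      exact lt_of_le_of_lt (min_le_left _ _) (by linarith)
    have hupow : 0 < |u| ^ (θ - 1) := Real.rpow_pos_of_pos (abs_pos.mpr hu0.ne') _
    have h1 := H x u hu0.ne' huδ
    have h2 : g x u / |u| ^ (θ - 1) ≤ c := hg_mono x u t hu0.ne' ht.ne' (min_le_right _ _)
    have h2' : g x u ≤ c * |u| ^ (θ - 1) := (div_le_iff₀ hupow).mp h2
    have h1' : -(-c / 2 * |u| ^ (θ - 1)) ≤ g x u := neg_le_of_abs_le h1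
    nlinarith
  have hneg : ∀ x t, t < 0 → g x t ≤ 0 := by
    intro x t ht
    by_contra hlt
    push_neg at hlt
    have htpow : 0 < |t| ^ (θ - 1) := Real.rpow_pos_of_pos (abs_pos.mpr ht.ne) _
    have hc : 0 < g x t / |t| ^ (θ - 1) := div_pos hlt htpow
    set c := g x t / |t| ^ (θ - 1) with hcdef
    obtain ⟨δ, hδ, H⟩ := hg_lim (c / 2) (by linarith)
    set u := max (-(δ / 2)) t with hudef
    have hu0 : u < 0 := max_lt (by linarith) ht
    have huδ : |u| < δ := by
      rw [abs_of_neg hu0]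
      have : -(δ / 2) ≤ u := le_max_left _ _
      linarith
    have hupow : 0 < |u| ^ (θ - 1) := Real.rpow_pos_of_pos (abs_pos.mpr hu0.ne) _
    have h1 := H x u hu0.ne huδ
    have h2 : c ≤ g x u / |u| ^ (θ - 1) := hg_mono x t u ht.ne hu0.ne (le_max_right _ _)
    have h2' : c * |u| ^ (θ - 1) ≤ g x u := (le_div_iff₀ hupow).mp h2
    have h1' : g x u ≤ c / 2 * |u| ^ (θ - 1) := le_of_abs_le h1
    nlinarith
  intro x s
  have hcont : Continuous fun t => g x t := hg_cont.comp (Continuous.prodMk_right x)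
  have hcontpow : Continuous fun t : ℝ => |t| ^ (θ - 1) :=
    continuous_abs.rpow_const fun t => Or.inr hθ1.le
  rcases lt_trichotomy s 0 with hs | rfl | hs
  · -- s < 0
    have hspow : 0 < |s| ^ (θ - 1) := Real.rpow_pos_of_pos (abs_pos.mpr hs.ne) _
    set c := g x s / |s| ^ (θ - 1) with hcdef
    have hgs : g x s = c * |s| ^ (θ - 1) := by
      rw [hcdef, div_mul_cancel₀ _ hspow.ne']
    have hsymm : (∫ t in (0:ℝ)..s, g x t) = -∫ t in s..(0:ℝ), g x t :=
      intervalIntegral.integral_symm s 0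
    have hint1 : IntervalIntegrable (fun t => g x t) volume s 0 :=
      hcont.intervalIntegrable _ _
    have hint2 : IntervalIntegrable (fun t => c * |t| ^ (θ - 1)) volume s 0 :=
      ((hcontpow.const_smul c).intervalIntegrable _ _ : _)
    have hptwise : ∀ t ∈ Set.Icc s (0:ℝ), c * |t| ^ (θ - 1) ≤ g x t := by
      intro t ⟨hst, ht0⟩
      rcases eq_or_lt_of_le ht0 with rfl | ht
      · simp [hg0, Real.zero_rpow hθ1.ne']
      · have htpow : 0 < |t| ^ (θ - 1) := Real.rpow_pos_of_pos (abs_pos.mpr ht.ne) _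
        have := hg_mono x s t hs.ne ht.ne hst
        calc c * |t| ^ (θ - 1) ≤ g x t / |t| ^ (θ - 1) * |t| ^ (θ - 1) := by
              exact mul_le_mul_of_nonneg_right this htpow.le
          _ = g x t := by field_simp
    have hmono := intervalIntegral.integral_mono_on hs.le hint2 hint1 hptwise
    -- evaluate ∫ s..0 c*|t|^(θ-1)
    have heval : (∫ t in s..(0:ℝ), c * |t| ^ (θ - 1)) = c * ((-s) ^ θ / θ) := by
      have hEq : Set.EqOn (fun t => c * |t| ^ (θ - 1)) (fun t => c * (-t) ^ (θ - 1))
          (Set.uIcc s 0) := by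
        intro t ht
        rw [Set.uIcc_of_le hs.le] at ht
        simp [abs_of_nonpos ht.2]
      rw [intervalIntegral.integral_congr hEq]
      have : (∫ t in s..(0:ℝ), c * (-t) ^ (θ - 1))
          = ∫ t in (-(0:ℝ))..(-s), c * t ^ (θ - 1) :=
        intervalIntegral.integral_comp_neg (fun t => c * t ^ (θ - 1))
      rw [this, neg_zero, intervalIntegral.integral_const_mul,
        integral_rpow (Or.inl (by linarith))]
      rw [sub_add_cancel, Real.zero_rpow hθ0.ne']
      ring
    have hneg' : ∀ t ∈ Set.Icc s (0:ℝ), g x t ≤ 0 := by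
      intro t ⟨hst, ht0⟩
      rcases eq_or_lt_of_le ht0 with rfl | ht
      · simp [hg0]
      · exact hneg x t ht
    have hupper : (∫ t in s..(0:ℝ), g x t) ≤ 0 := by
      have := intervalIntegral.integral_mono_on hs.le hint1
        (intervalIntegrable_const (c := (0:ℝ))) hneg'
      simpa using this
    constructor
    · rw [hsymm]
      rw [heval] at hmono
      have hsne : (-s) ≠ 0 := (neg_pos.mpr hs).ne'
      have hspow' : (-s) ^ θ = |s| ^ (θ - 1) * (-s) := by
        rw [abs_of_neg hs, ← Real.rpow_add_one hsne, sub_add_cancel]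
      have hrhs : 1 / θ * (g x s * s) = -(c * ((-s) ^ θ / θ)) := by
        rw [hgs, hspow']; ring
      linarith
    · rw [hsymm]; linarith
  · constructor
    · simp [hg0, intervalIntegral.integral_same]
    · simp [intervalIntegral.integral_same]
  · -- 0 < s
    have hspow : 0 < |s| ^ (θ - 1) := Real.rpow_pos_of_pos (abs_pos.mpr hs.ne') _
    set c := g x s / |s| ^ (θ - 1) with hcdef
    have hgs : g x s = c * |s| ^ (θ - 1) := by rw [hcdef, div_mul_cancel₀ _ hspow.ne']
    have hint1 : IntervalIntegrable (fun t => g x t) volume 0 s :=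
      hcont.intervalIntegrable _ _
    have hint2 : IntervalIntegrable (fun t => c * |t| ^ (θ - 1)) volume 0 s :=
      ((hcontpow.const_smul c).intervalIntegrable _ _ : _)
    have hptwise : ∀ t ∈ Set.Icc (0:ℝ) s, g x t ≤ c * |t| ^ (θ - 1) := by
      intro t ⟨ht0, hts⟩
      rcases eq_or_lt_of_le ht0 with rfl | ht
      · simp [hg0, Real.zero_rpow hθ1.ne']
      · have htpow : 0 < |t| ^ (θ - 1) := Real.rpow_pos_of_pos (abs_pos.mpr ht.ne') _
        have := hg_mono x t s ht.ne' hs.ne' hts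
        calc g x t = g x t / |t| ^ (θ - 1) * |t| ^ (θ - 1) := by field_simp
          _ ≤ c * |t| ^ (θ - 1) := mul_le_mul_of_nonneg_right this htpow.le
    have hmono := intervalIntegral.integral_mono_on hs.le hint1 hint2 hptwise
    have heval : (∫ t in (0:ℝ)..s, c * |t| ^ (θ - 1)) = c * (s ^ θ / θ) := by
      have hEq : Set.EqOn (fun t => c * |t| ^ (θ - 1)) (fun t => c * t ^ (θ - 1))
          (Set.uIcc 0 s) := by
        intro t ht
        rw [Set.uIcc_of_le hs.le] at ht
        simp [abs_of_nonneg ht.1]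
      rw [intervalIntegral.integral_congr hEq, intervalIntegral.integral_const_mul,
        integral_rpow (Or.inl (by linarith))]
      rw [sub_add_cancel, Real.zero_rpow hθ0.ne']
      ring
    constructor
    · rw [heval] at hmono
      have hspow' : s ^ θ = |s| ^ (θ - 1) * s := by
        rw [abs_of_pos hs, ← Real.rpow_add_one hs.ne' (θ - 1), sub_add_cancel]
      calc (∫ t in (0:ℝ)..s, g x t) ≤ c * (s ^ θ / θ) := hmono
        _ = 1 / θ * (g x s * s) := by rw [hgs, hspow']; ring
    · refine intervalIntegral.integral_nonneg hs.le fun t ⟨ht0, _⟩ => ?_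
      rcases eq_or_lt_of_le ht0 with rfl | ht
      · simp [hg0]
      · exact hpos x t ht
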